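/- Let R be a commutative ring, let A be an m × n matrix with entries in R, and let b ∈ R^m be non-zero. If the system Ax = b has no constant solution (i.e. there is no r ∈ R with A applied to (r, r, …, r) equal to b), then there exists a finite colouring of R such that no vector x ∈ R^n with all entries of the same colour satisfies Ax = b. -/

import Mathlib

set_option maxHeartbeats 1000000 in
/-- If the system `Ax = b` over a commutative ring `R` (with `b ∈ R^m` non-zero) has no
constant solution, then there is a finite colouring of `R` with no monochromatic solution. -/
theorem exists_bad_colouring_ring {R : Type*} [CommRing R] {m n : ℕ}
    (A : Matrix (Fin m) (Fin n) R) (b : Fin m → R) (hb : b ≠ 0)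
    (h : ¬ ∃ r : R, A.mulVec (fun _ => r) = b) :
    ∃ (κ : Type) (_ : Finite κ) (c : R → κ),
      ¬ ∃ x : Fin n → R, (∀ i j : Fin n, c (x i) = c (x j)) ∧ A.mulVec x = b := by
  classical
  by_cases hS : ∃ x : Fin n → R, A.mulVec x = b
  case neg =>
    exact ⟨Unit, inferInstance, fun _ => (), fun ⟨x, _, hx⟩ => hS ⟨x, hx⟩⟩
  obtain ⟨x0, hx0⟩ := hS
  rcases Nat.eq_zero_or_pos n with hn | hn
  · exfalso
    apply hb
    subst hn
    have : A.mulVec x0 = 0 := by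
      funext i
      simp [Matrix.mulVec, dotProduct]
    rw [← hx0, this]
  have i0 : Fin n := ⟨0, hn⟩
  -- the diagonal map
  set Dg : R →ₗ[R] (Fin n → R) := LinearMap.pi fun _ => LinearMap.id with hDg
  set N : Submodule R (Fin n → R) :=
    LinearMap.ker (Matrix.mulVecLin A) ⊔ LinearMap.range Dg with hNdef
  have hx0N : x0 ∉ N := by
    intro hmem
    rw [hNdef, Submodule.mem_sup] at hmem
    obtain ⟨y, hy, z, hz, hyz⟩ := hmem
    obtain ⟨r, rfl⟩ := hz
    refine h ⟨r, ?_⟩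
    have hy' : A.mulVec y = 0 := hy
    have hDgr : (fun _ : Fin n => r) = Dg r := rfl
    rw [hDgr]
    have : A.mulVec (y + Dg r) = b := by rw [hyz, hx0]
    rwa [Matrix.mulVec_add, hy', zero_add] at this
  have hm0 : (Submodule.Quotient.mk x0 : (Fin n → R) ⧸ N) ≠ 0 := by
    simpa [Submodule.Quotient.mk_eq_zero] using hx0N
  obtain ⟨φ, hφ⟩ := CharacterModule.exists_character_apply_ne_zero_of_ne_zero hm0
  -- the character, pulled back to `Fin n → R`
  set g : (Fin n → R) →+ AddCircle (1 : ℚ) :=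
    AddMonoidHom.mk' (fun v => φ (Submodule.Quotient.mk v))
      (fun a b' => by rw [Submodule.Quotient.mk_add, map_add]) with hg
  have hker : ∀ v ∈ N, g v = 0 := by
    intro v hv
    show φ (Submodule.Quotient.mk v) = 0
    rw [(Submodule.Quotient.mk_eq_zero N).mpr hv, map_zero]
  have hsum : ∀ v : Fin n → R, ∑ j, g (Pi.single j (v j)) = g v := by
    intro v
    rw [← map_sum]
    congr 1
    exact Finset.univ_sum_single v
  have hdiag : ∀ r : R, g (fun _ => r) = 0 := fun r =>
    hker _ (Submodule.mem_sup_right ⟨r, rfl⟩)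
  have ht : g x0 ≠ 0 := hφ
  have hsol : ∀ x : Fin n → R, A.mulVec x = b → g x = g x0 := by
    intro x hx
    have hmem : x - x0 ∈ N := by
      apply Submodule.mem_sup_left
      rw [LinearMap.mem_ker, map_sub]
      simp only [Matrix.mulVecLin_apply]
      rw [hx, hx0, sub_self]
    have := hker _ hmem
    rw [map_sub, sub_eq_zero] at this
    exact this
  -- representatives in [0,1)
  haveI : Fact ((0:ℚ) < 1) := ⟨zero_lt_one⟩
  set cph : ℚ →+ AddCircle (1:ℚ) :=
    QuotientAddGroup.mk' (AddSubgroup.zmultiples (1:ℚ)) with hcphdef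
  set lft : AddCircle (1:ℚ) → ℚ := fun q => (AddCircle.equivIco 1 0 q : ℚ) with hlftdef
  have hlft_mem : ∀ q, lft q ∈ Set.Ico (0:ℚ) 1 := by
    intro q
    simpa using (AddCircle.equivIco 1 0 q).2
  have hlft_coe : ∀ q : AddCircle (1:ℚ), cph (lft q) = q := fun q =>
    (AddCircle.equivIco 1 0).symm_apply_apply q
  have ht0_lt : lft (g x0) < 1 := (hlft_mem (g x0)).2
  have ht0_pos : 0 < lft (g x0) := by
    rcases (hlft_mem (g x0)).1.lt_or_eq with h' | h'
    · exact h'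
    · exact absurd (by rw [← hlft_coe (g x0), ← h', map_zero]) ht
  obtain ⟨K, hK⟩ := exists_nat_gt
    (max ((n:ℚ)/lft (g x0)) ((n:ℚ)/(1 - lft (g x0))))
  have hKpos : (0:ℚ) < K :=
    lt_of_le_of_lt (le_trans (div_nonneg (Nat.cast_nonneg n) ht0_pos.le) (le_max_left _ _)) hK
  have hK0 : 0 < K := by exact_mod_cast hKpos
  have hnK1 : (n:ℚ) < K * lft (g x0) :=
    (div_lt_iff₀ ht0_pos).mp ((le_max_left _ _).trans_lt hK)
  have hnK2 : (n:ℚ) < K * (1 - lft (g x0)) :=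
    (div_lt_iff₀ (by linarith)).mp ((le_max_right _ _).trans_lt hK)
  -- the colouring
  have hd : ∀ (r : R) (j : Fin n), (⌊(K:ℚ) * lft (g (Pi.single j r))⌋).toNat < K := by
    intro r j
    have h1 : (K:ℚ) * lft (g (Pi.single j r)) < K := by
      have := (hlft_mem (g (Pi.single j r))).2
      nlinarith
    have h2 : ⌊(K:ℚ) * lft (g (Pi.single j r))⌋ < (K:ℤ) := by
      rw [Int.floor_lt]
      push_cast
      exact h1
    omega
  refine ⟨Fin n → Fin K, inferInstance, fun r j => ⟨_, hd r j⟩, ?_⟩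
  rintro ⟨x, hmono, hx⟩
  set u : Fin n → ℚ := fun j => lft (g (Pi.single j (x j))) with hu
  set v : Fin n → ℚ := fun j => lft (g (Pi.single j (x i0))) with hv
  have hfl : ∀ j, ⌊(K:ℚ) * u j⌋ = ⌊(K:ℚ) * v j⌋ := by
    intro j
    have hcj := congrFun (hmono j i0) j
    have hnat : (⌊(K:ℚ) * u j⌋).toNat = (⌊(K:ℚ) * v j⌋).toNat := by
      simpa [hu, hv] using congrArg Fin.val hcj
    have h1 : 0 ≤ ⌊(K:ℚ) * u j⌋ :=
      Int.floor_nonneg.mpr (mul_nonneg hKpos.le (hlft_mem _).1)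
    have h2 : 0 ≤ ⌊(K:ℚ) * v j⌋ :=
      Int.floor_nonneg.mpr (mul_nonneg hKpos.le (hlft_mem _).1)
    omega
  have habs : ∀ j, |u j - v j| < 1 / K := by
    intro j
    have h1 := Int.abs_sub_lt_one_of_floor_eq_floor (hfl j)
    rw [lt_div_iff₀ hKpos]
    have h2 : |u j - v j| * K = |(K:ℚ) * u j - K * v j| := by
      calc |u j - v j| * (K:ℚ) = |u j - v j| * |(K:ℚ)| := by rw [abs_of_pos hKpos]
        _ = |(u j - v j) * K| := (abs_mul _ _).symm
        _ = |(K:ℚ) * u j - K * v j| := by congr 1; ring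
    rw [h2]
    exact h1
  set s : ℚ := ∑ j, (u j - v j) with hs
  -- |s| is small
  haveI : Nonempty (Fin n) := ⟨i0⟩
  have hsum_lt : ∑ j, |u j - v j| < (n:ℚ) * (1/K) := by
    have := Finset.sum_lt_sum_of_nonempty Finset.univ_nonempty
      (fun j (_ : j ∈ Finset.univ) => habs j)
    simpa [Finset.sum_const, Finset.card_univ, nsmul_eq_mul] using this
  have hs_abs : |s| < (n:ℚ) * (1/K) :=
    lt_of_le_of_lt (Finset.abs_sum_le_sum_abs _ _) hsum_lt
  have hs1 : |s| < lft (g x0) := by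
    have : (n:ℚ) * (1/K) < lft (g x0) := by
      rw [mul_one_div, div_lt_iff₀ hKpos]
      linarith [mul_comm (K:ℚ) (lft (g x0))]
    linarith
  have hs2 : |s| < 1 - lft (g x0) := by
    have : (n:ℚ) * (1/K) < 1 - lft (g x0) := by
      rw [mul_one_div, div_lt_iff₀ hKpos]
      linarith [mul_comm (K:ℚ) (1 - lft (g x0))]
    linarith
  -- s maps to g x0 in the circle
  have hcs : cph s = g x0 := by
    rw [hs, map_sum]
    have e2 : ∀ j : Fin n, cph (u j - v j)
        = g (Pi.single j (x j)) - g (Pi.single j (x i0)) := by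
      intro j
      rw [map_sub, hu, hv]
      simp only []
      rw [hlft_coe, hlft_coe]
    calc ∑ j, cph (u j - v j)
        = ∑ j, (g (Pi.single j (x j)) - g (Pi.single j (x i0))) :=
          Finset.sum_congr rfl fun j _ => e2 j
      _ = (∑ j, g (Pi.single j (x j))) - ∑ j, g (Pi.single j (x i0)) :=
          Finset.sum_sub_distrib _ _
      _ = g x - g (fun _ => x i0) := by rw [hsum x, hsum (fun _ => x i0)]
      _ = g x0 - 0 := by rw [hsol x hx, hdiag (x i0)]
      _ = g x0 := sub_zero _
  -- hence s - lft (g x0) is an integer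
  have hzero : ((s - lft (g x0) : ℚ) : AddCircle (1:ℚ)) = 0 := by
    have : cph (s - lft (g x0)) = 0 := by
      rw [map_sub, hcs, hlft_coe, sub_self]
    exact this
  obtain ⟨k, hk⟩ := (AddCircle.coe_eq_zero_iff (1:ℚ)).mp hzero
  rw [zsmul_eq_mul, mul_one] at hk
  -- contradiction: k is an integer strictly between -1 and 0
  have habs_s := abs_lt.mp hs1
  have habs_s2 := abs_lt.mp hs2
  have hk1 : (k:ℚ) < 0 := by linarith
  have hk2 : (-1:ℚ) < k := by linarith
  have hk1' : k < 0 := by exact_mod_cast hk1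
  have hk2' : (-1:ℤ) < k := by exact_mod_cast hk2
  omega
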